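/- arXiv:2505.12003 — 2 statements merged into one kernel-verified Lean document; each statement's English description precedes it below -/
import Mathlib

section
/- Let d ∈ ℕ, X ⊆ ℝ^d, σ = ReLU, and let f, g ∈ G_{d,σ}(X,ℝ). Then there exist L ∈ ℕ, h₁, h₂ ∈ ℕ, vectors v₁ ∈ ℝ^{h₁}, v₂ ∈ ℝ^{h₂} with ‖v₁‖₂ = ‖v₂‖₂ = 1, affine maps Q₁ : ℝ^d → ℝ^{h₁} and Q₂ : ℝ^d → ℝ^{h₂}, layers Φ_{θ₁}, …, Φ_{θ_L} ∈ E_{h₁+h₂,σ}, and a symmetric positive semi-definite matrix M ∈ ℝ^{(h₁+h₂)×(h₁+h₂)} with ‖M‖₂ ≤ 1, such that for all x ∈ X the concatenated vector (f(x)·v₁, g(x)·v₂) ∈ ℝ^{h₁+h₂} equals M applied to (Φ_{θ_L} ∘ ⋯ ∘ Φ_{θ₁})((Q₁(x), Q₂(x))). -/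
open scoped BigOperators

noncomputable section

def relu (t : ℝ) : ℝ := max t 0

def entrywise {n : ℕ} (σ : ℝ → ℝ) (x : EuclideanSpace ℝ (Fin n)) : EuclideanSpace ℝ (Fin n) :=
  WithLp.toLp 2 (fun i => σ (x i))

def matVec {k h : ℕ} (W : Matrix (Fin k) (Fin h) ℝ) (x : EuclideanSpace ℝ (Fin h)) :
    EuclideanSpace ℝ (Fin k) :=
  Matrix.toEuclideanLin W x

/-- Spectral norm of a real matrix, as the operator norm between Euclidean spaces. -/
def specNorm {k h : ℕ} (W : Matrix (Fin k) (Fin h) ℝ) : ℝ :=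
  ‖LinearMap.toContinuousLinearMap (Matrix.toEuclideanLin W)‖

/-- Membership in `E_{h,σ}` with `σ = ReLU`. -/
def IsEulerStep {h : ℕ} (Φ : EuclideanSpace ℝ (Fin h) → EuclideanSpace ℝ (Fin h)) : Prop :=
  ∃ (k : ℕ) (W : Matrix (Fin k) (Fin h) ℝ) (b : EuclideanSpace ℝ (Fin k)) (τ : ℝ),
    0 ≤ τ ∧ τ ≤ 2 ∧ specNorm W ≤ 1 ∧
    ∀ x, Φ x = x - τ • matVec W.transpose (entrywise relu (matVec W x + b))

def compChain {α : Type*} : (L : ℕ) → (Fin L → α → α) → α → α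
  | 0, _, x => x
  | L + 1, Φ, x => Φ (Fin.last L) (compChain L (fun i => Φ i.castSucc) x)

/-- Membership in `G_{d,σ}(X,ℝ)` with `σ = ReLU`. -/
def InG {d : ℕ} (X : Set (EuclideanSpace ℝ (Fin d))) (g : EuclideanSpace ℝ (Fin d) → ℝ) : Prop :=
  LipschitzOnWith 1 g X ∧
  ∃ (h L : ℕ) (Qhat : Matrix (Fin h) (Fin d) ℝ) (qhat : EuclideanSpace ℝ (Fin h))
    (Φ : Fin L → (EuclideanSpace ℝ (Fin h) → EuclideanSpace ℝ (Fin h)))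
    (v : EuclideanSpace ℝ (Fin h)),
    (∀ ℓ, IsEulerStep (Φ ℓ)) ∧ ‖v‖ = 1 ∧
    ∀ x ∈ X, g x = ∑ i, v i * compChain L Φ (matVec Qhat x + qhat) i

def concatE {h₁ h₂ : ℕ} (u : EuclideanSpace ℝ (Fin h₁)) (v : EuclideanSpace ℝ (Fin h₂)) :
    EuclideanSpace ℝ (Fin (h₁ + h₂)) :=
  WithLp.toLp 2 (Fin.append (fun i => u i) (fun i => v i))

/-- The residual blocks in `Ẽ_{h,σ}`: `(max{x₁,x₂}, min{x₁,x₂}, x₃, Φ'(x₄,…,x_{h+3}))`. -/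
def tildeLayer {h : ℕ} (Φ' : EuclideanSpace ℝ (Fin h) → EuclideanSpace ℝ (Fin h))
    (x : EuclideanSpace ℝ (Fin (h + 3))) : EuclideanSpace ℝ (Fin (h + 3)) :=
  WithLp.toLp 2 fun j =>
    if _h0 : (j : ℕ) = 0 then max (x ⟨0, by omega⟩) (x ⟨1, by omega⟩)
    else if _h1 : (j : ℕ) = 1 then min (x ⟨0, by omega⟩) (x ⟨1, by omega⟩)
    else if _h2 : (j : ℕ) = 2 then x ⟨2, by omega⟩
    else Φ' (WithLp.toLp 2 (fun i => x ⟨(i : ℕ) + 3, by have := i.isLt; omega⟩))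
      ⟨(j : ℕ) - 3, by have := j.isLt; omega⟩

/-- Membership in `Ẽ_{h,σ}` with `σ = ReLU`. -/
def IsTildeLayer {h : ℕ} (Φ : EuclideanSpace ℝ (Fin (h + 3)) → EuclideanSpace ℝ (Fin (h + 3))) :
    Prop :=
  ∃ Φ', IsEulerStep Φ' ∧ ∀ x, Φ x = tildeLayer Φ' x

def emb0 {n : ℕ} : Fin 1 → Fin (n + 3) := fun _ => ⟨0, by omega⟩
def emb1 {n : ℕ} : Fin 1 → Fin (n + 3) := fun _ => ⟨1, by omega⟩
def emb2 {n : ℕ} : Fin 1 → Fin (n + 3) := fun _ => ⟨2, by omega⟩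
def embT {n : ℕ} : Fin n → Fin (n + 3) := fun i => ⟨(i : ℕ) + 3, by have := i.isLt; omega⟩

/-- Membership in `R_{d,m}` for `m = (1,1,1,n)`: each block row of the matrix has spectral
norm at most `1`. -/
def memRm {d n : ℕ} (Q : Matrix (Fin (n + 3)) (Fin d) ℝ) : Prop :=
  specNorm (Q.submatrix emb0 id) ≤ 1 ∧ specNorm (Q.submatrix emb1 id) ≤ 1 ∧
    specNorm (Q.submatrix emb2 id) ≤ 1 ∧ specNorm (Q.submatrix embT id) ≤ 1

def rowBlockSum {n r : ℕ} (A : Matrix (Fin (n + 3)) (Fin (n + 3)) ℝ)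
    (e : Fin r → Fin (n + 3)) : ℝ :=
  specNorm (A.submatrix e emb0) + specNorm (A.submatrix e emb1) +
    specNorm (A.submatrix e emb2) + specNorm (A.submatrix e embT)

/-- Membership in `L_m` for `m = (1,1,1,n)`: for each block row, the sum of the spectral
norms of the blocks is at most `1`. -/
def memLm {n : ℕ} (A : Matrix (Fin (n + 3)) (Fin (n + 3)) ℝ) : Prop :=
  rowBlockSum A emb0 ≤ 1 ∧ rowBlockSum A emb1 ≤ 1 ∧
    rowBlockSum A emb2 ≤ 1 ∧ rowBlockSum A embT ≤ 1

/-- `Φ_{L+1} ∘ A_L ∘ ⋯ ∘ Φ₂ ∘ A₁ ∘ Φ₁`, the alternating composition. -/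
def altChain {α : Type*} : (L : ℕ) → (Fin (L + 1) → α → α) → (Fin L → α → α) → α → α
  | 0, Φ, _, x => Φ 0 x
  | L + 1, Φ, A, x =>
      Φ (Fin.last (L + 1)) (A (Fin.last L)
        (altChain L (fun i => Φ i.castSucc) (fun i => A i.castSucc) x))

/-- Membership in the fixed-width class `tilde-G_{d,σ,n+3}(X,ℝ)` with `σ = ReLU`. -/
def InTildeG {d n : ℕ} (X : Set (EuclideanSpace ℝ (Fin d)))
    (g : EuclideanSpace ℝ (Fin d) → ℝ) : Prop :=
  ∃ (L : ℕ) (Qhat : Matrix (Fin (n + 3)) (Fin d) ℝ) (qhat : EuclideanSpace ℝ (Fin (n + 3)))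
    (Φ : Fin (L + 1) → (EuclideanSpace ℝ (Fin (n + 3)) → EuclideanSpace ℝ (Fin (n + 3))))
    (Ahat : Fin L → Matrix (Fin (n + 3)) (Fin (n + 3)) ℝ)
    (ahat : Fin L → EuclideanSpace ℝ (Fin (n + 3)))
    (v : EuclideanSpace ℝ (Fin (n + 3))),
    memRm Qhat ∧ (∀ ℓ, IsTildeLayer (Φ ℓ)) ∧ (∀ ℓ, memLm (Ahat ℓ)) ∧ (∑ i, |v i|) ≤ 1 ∧
    ∀ x ∈ X,
      g x = ∑ i, v i *
        altChain L Φ (fun ℓ u => matVec (Ahat ℓ) u + ahat ℓ) (matVec Qhat x + qhat) i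

end


noncomputable section StmtFiveAux

def leftE {h₁ h₂ : ℕ} (x : EuclideanSpace ℝ (Fin (h₁ + h₂))) : EuclideanSpace ℝ (Fin h₁) :=
  WithLp.toLp 2 (fun i => x (Fin.castAdd h₂ i))
def rightE {h₁ h₂ : ℕ} (x : EuclideanSpace ℝ (Fin (h₁ + h₂))) : EuclideanSpace ℝ (Fin h₂) :=
  WithLp.toLp 2 (fun i => x (Fin.natAdd h₁ i))

@[simp] lemma concatE_left {h₁ h₂ : ℕ} (u : EuclideanSpace ℝ (Fin h₁))
    (v : EuclideanSpace ℝ (Fin h₂)) (i : Fin h₁) : concatE u v (Fin.castAdd h₂ i) = u i :=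
  Fin.append_left (fun i => u i) (fun i => v i) i
@[simp] lemma concatE_right {h₁ h₂ : ℕ} (u : EuclideanSpace ℝ (Fin h₁))
    (v : EuclideanSpace ℝ (Fin h₂)) (i : Fin h₂) : concatE u v (Fin.natAdd h₁ i) = v i :=
  Fin.append_right (fun i => u i) (fun i => v i) i
@[simp] lemma leftE_concatE {h₁ h₂ : ℕ} (u : EuclideanSpace ℝ (Fin h₁))
    (v : EuclideanSpace ℝ (Fin h₂)) : leftE (concatE u v) = u := by ext i; simp [leftE]
@[simp] lemma rightE_concatE {h₁ h₂ : ℕ} (u : EuclideanSpace ℝ (Fin h₁))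
    (v : EuclideanSpace ℝ (Fin h₂)) : rightE (concatE u v) = v := by ext i; simp [rightE]
lemma concatE_leftE_rightE {h₁ h₂ : ℕ} (x : EuclideanSpace ℝ (Fin (h₁ + h₂))) :
    concatE (leftE x) (rightE x) = x := by
  ext j; refine Fin.addCases (fun i => ?_) (fun i => ?_) j <;> simp [leftE, rightE]
lemma concatE_sub {h₁ h₂ : ℕ} (a c : EuclideanSpace ℝ (Fin h₁)) (b d : EuclideanSpace ℝ (Fin h₂)) :
    concatE a b - concatE c d = concatE (a - c) (b - d) := by
  ext j; refine Fin.addCases (fun i => ?_) (fun i => ?_) j <;>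
    simp [concatE, Fin.append_left, Fin.append_right, PiLp.sub_apply]
lemma concatE_smul {h₁ h₂ : ℕ} (τ : ℝ) (a : EuclideanSpace ℝ (Fin h₁))
    (b : EuclideanSpace ℝ (Fin h₂)) : τ • concatE a b = concatE (τ • a) (τ • b) := by
  ext j; refine Fin.addCases (fun i => ?_) (fun i => ?_) j <;>
    simp [concatE, Fin.append_left, Fin.append_right, PiLp.smul_apply]
lemma matVec_apply {k h : ℕ} (W : Matrix (Fin k) (Fin h) ℝ) (x : EuclideanSpace ℝ (Fin h))
    (i : Fin k) : matVec W x i = ∑ j, W i j * x j := rfl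
lemma norm_sq_concatE {h₁ h₂ : ℕ} (u : EuclideanSpace ℝ (Fin h₁))
    (v : EuclideanSpace ℝ (Fin h₂)) : ‖concatE u v‖ ^ 2 = ‖u‖ ^ 2 + ‖v‖ ^ 2 := by
  have e1 := EuclideanSpace.norm_eq (concatE u v)
  have e2 := EuclideanSpace.norm_eq u
  have e3 := EuclideanSpace.norm_eq v
  rw [e1, e2, e3, Real.sq_sqrt (by positivity), Real.sq_sqrt (by positivity),
    Real.sq_sqrt (by positivity), Fin.sum_univ_add]
  simp
lemma norm_leftE_le {h₁ h₂ : ℕ} (x : EuclideanSpace ℝ (Fin (h₁ + h₂))) : ‖leftE x‖ ≤ ‖x‖ := by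
  have h := norm_sq_concatE (leftE x) (rightE x)
  rw [concatE_leftE_rightE] at h
  nlinarith [norm_nonneg (leftE x), norm_nonneg x, sq_nonneg ‖rightE x‖]
lemma norm_rightE_le {h₁ h₂ : ℕ} (x : EuclideanSpace ℝ (Fin (h₁ + h₂))) : ‖rightE x‖ ≤ ‖x‖ := by
  have h := norm_sq_concatE (leftE x) (rightE x)
  rw [concatE_leftE_rightE] at h
  nlinarith [norm_nonneg (rightE x), norm_nonneg x, sq_nonneg ‖leftE x‖]
lemma specNorm_nonneg {k h : ℕ} (W : Matrix (Fin k) (Fin h) ℝ) : 0 ≤ specNorm W :=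
  norm_nonneg _
lemma norm_matVec_le {k h : ℕ} (W : Matrix (Fin k) (Fin h) ℝ) (x : EuclideanSpace ℝ (Fin h)) :
    ‖matVec W x‖ ≤ specNorm W * ‖x‖ :=
  (LinearMap.toContinuousLinearMap (Matrix.toEuclideanLin W)).le_opNorm x
lemma specNorm_le_bound {k h : ℕ} (W : Matrix (Fin k) (Fin h) ℝ) {C : ℝ} (hC : 0 ≤ C)
    (h : ∀ x, ‖matVec W x‖ ≤ C * ‖x‖) : specNorm W ≤ C :=
  ContinuousLinearMap.opNorm_le_bound _ hC h

def liftL {h₁ h₂ : ℕ} (Φ : EuclideanSpace ℝ (Fin h₁) → EuclideanSpace ℝ (Fin h₁))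
    (x : EuclideanSpace ℝ (Fin (h₁ + h₂))) : EuclideanSpace ℝ (Fin (h₁ + h₂)) :=
  concatE (Φ (leftE x)) (rightE x)
def liftR {h₁ h₂ : ℕ} (Φ : EuclideanSpace ℝ (Fin h₂) → EuclideanSpace ℝ (Fin h₂))
    (x : EuclideanSpace ℝ (Fin (h₁ + h₂))) : EuclideanSpace ℝ (Fin (h₁ + h₂)) :=
  concatE (leftE x) (Φ (rightE x))
def padL {k h₁ h₂ : ℕ} (W : Matrix (Fin k) (Fin h₁) ℝ) : Matrix (Fin k) (Fin (h₁ + h₂)) ℝ :=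
  Matrix.of fun i => Fin.append (fun j => W i j) (fun _ : Fin h₂ => 0)
def padR {k h₁ h₂ : ℕ} (W : Matrix (Fin k) (Fin h₂) ℝ) : Matrix (Fin k) (Fin (h₁ + h₂)) ℝ :=
  Matrix.of fun i => Fin.append (fun _ : Fin h₁ => 0) (fun j => W i j)

lemma matVec_padL {k h₁ h₂ : ℕ} (W : Matrix (Fin k) (Fin h₁) ℝ)
    (x : EuclideanSpace ℝ (Fin (h₁ + h₂))) : matVec (padL (h₂ := h₂) W) x = matVec W (leftE x) := by
  ext i
  rw [matVec_apply, matVec_apply, Fin.sum_univ_add]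
  simp [padL, leftE]
lemma matVec_padR {k h₁ h₂ : ℕ} (W : Matrix (Fin k) (Fin h₂) ℝ)
    (x : EuclideanSpace ℝ (Fin (h₁ + h₂))) : matVec (padR (h₁ := h₁) W) x = matVec W (rightE x) := by
  ext i
  rw [matVec_apply, matVec_apply, Fin.sum_univ_add]
  simp [padR, rightE]
lemma matVec_padL_transpose {k h₁ h₂ : ℕ} (W : Matrix (Fin k) (Fin h₁) ℝ)
    (y : EuclideanSpace ℝ (Fin k)) :
    matVec (padL (h₂ := h₂) W).transpose y = concatE (matVec W.transpose y) 0 := by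
  ext j
  refine Fin.addCases (fun i => ?_) (fun i => ?_) j <;>
    simp [matVec_apply, padL, Matrix.transpose_apply]
lemma matVec_padR_transpose {k h₁ h₂ : ℕ} (W : Matrix (Fin k) (Fin h₂) ℝ)
    (y : EuclideanSpace ℝ (Fin k)) :
    matVec (padR (h₁ := h₁) W).transpose y = concatE 0 (matVec W.transpose y) := by
  ext j
  refine Fin.addCases (fun i => ?_) (fun i => ?_) j <;>
    simp [matVec_apply, padR, Matrix.transpose_apply]
lemma specNorm_padL {k h₁ h₂ : ℕ} (W : Matrix (Fin k) (Fin h₁) ℝ) :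
    specNorm (padL (h₂ := h₂) W) ≤ specNorm W := by
  refine specNorm_le_bound _ (specNorm_nonneg W) fun x => ?_
  rw [matVec_padL]
  calc ‖matVec W (leftE x)‖ ≤ specNorm W * ‖leftE x‖ := norm_matVec_le _ _
    _ ≤ specNorm W * ‖x‖ :=
        mul_le_mul_of_nonneg_left (norm_leftE_le x) (specNorm_nonneg W)
lemma specNorm_padR {k h₁ h₂ : ℕ} (W : Matrix (Fin k) (Fin h₂) ℝ) :
    specNorm (padR (h₁ := h₁) W) ≤ specNorm W := by
  refine specNorm_le_bound _ (specNorm_nonneg W) fun x => ?_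
  rw [matVec_padR]
  calc ‖matVec W (rightE x)‖ ≤ specNorm W * ‖rightE x‖ := norm_matVec_le _ _
    _ ≤ specNorm W * ‖x‖ :=
        mul_le_mul_of_nonneg_left (norm_rightE_le x) (specNorm_nonneg W)

lemma isEulerStep_liftL {h₁ h₂ : ℕ} {Φ : EuclideanSpace ℝ (Fin h₁) → EuclideanSpace ℝ (Fin h₁)}
    (hΦ : IsEulerStep Φ) : IsEulerStep (liftL (h₂ := h₂) Φ) := by
  obtain ⟨k, W, b, τ, hτ0, hτ2, hW, hx⟩ := hΦ
  refine ⟨k, padL W, b, τ, hτ0, hτ2, (specNorm_padL W).trans hW, fun x => ?_⟩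
  rw [matVec_padL, matVec_padL_transpose, concatE_smul, ← concatE_leftE_rightE x,
    concatE_sub]
  simp only [leftE_concatE, rightE_concatE, liftL, smul_zero, sub_zero]
  rw [hx (leftE x)]
lemma isEulerStep_liftR {h₁ h₂ : ℕ} {Φ : EuclideanSpace ℝ (Fin h₂) → EuclideanSpace ℝ (Fin h₂)}
    (hΦ : IsEulerStep Φ) : IsEulerStep (liftR (h₁ := h₁) Φ) := by
  obtain ⟨k, W, b, τ, hτ0, hτ2, hW, hx⟩ := hΦ
  refine ⟨k, padR W, b, τ, hτ0, hτ2, (specNorm_padR W).trans hW, fun x => ?_⟩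
  rw [matVec_padR, matVec_padR_transpose, concatE_smul, ← concatE_leftE_rightE x,
    concatE_sub]
  simp only [leftE_concatE, rightE_concatE, liftR, smul_zero, sub_zero]
  rw [hx (rightE x)]

lemma compChain_add' {α : Type*} (m n : ℕ) (Φ : Fin (m + n) → α → α) (x : α) :
    compChain (m + n) Φ x =
      compChain n (fun i => Φ (Fin.natAdd m i))
        (compChain m (fun i => Φ (Fin.castAdd n i)) x) := by
  induction n with
  | zero => rfl
  | succ n ih =>
    show Φ (Fin.last (m + n)) (compChain (m + n) (fun i => Φ i.castSucc) x) = _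
    rw [ih (fun i => Φ i.castSucc)]
    rfl

lemma compChain_liftL {h₁ h₂ L : ℕ}
    (Φ : Fin L → (EuclideanSpace ℝ (Fin h₁) → EuclideanSpace ℝ (Fin h₁)))
    (u : EuclideanSpace ℝ (Fin h₁)) (v : EuclideanSpace ℝ (Fin h₂)) :
    compChain L (fun i => liftL (Φ i)) (concatE u v) = concatE (compChain L Φ u) v := by
  induction L with
  | zero => rfl
  | succ L ih =>
    show liftL (Φ (Fin.last L)) (compChain L (fun i => liftL (Φ i.castSucc)) (concatE u v)) = _
    rw [ih (fun i => Φ i.castSucc)]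
    simp [liftL]
    rfl
lemma compChain_liftR {h₁ h₂ L : ℕ}
    (Φ : Fin L → (EuclideanSpace ℝ (Fin h₂) → EuclideanSpace ℝ (Fin h₂)))
    (u : EuclideanSpace ℝ (Fin h₁)) (v : EuclideanSpace ℝ (Fin h₂)) :
    compChain L (fun i => liftR (Φ i)) (concatE u v) = concatE u (compChain L Φ v) := by
  induction L with
  | zero => rfl
  | succ L ih =>
    show liftR (Φ (Fin.last L)) (compChain L (fun i => liftR (Φ i.castSucc)) (concatE u v)) = _
    rw [ih (fun i => Φ i.castSucc)]
    simp [liftR]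
    rfl

lemma compChain_pair {h₁ h₂ L₁ L₂ : ℕ}
    (Φ₁ : Fin L₁ → (EuclideanSpace ℝ (Fin h₁) → EuclideanSpace ℝ (Fin h₁)))
    (Φ₂ : Fin L₂ → (EuclideanSpace ℝ (Fin h₂) → EuclideanSpace ℝ (Fin h₂)))
    (u : EuclideanSpace ℝ (Fin h₁)) (v : EuclideanSpace ℝ (Fin h₂)) :
    compChain (L₁ + L₂)
      (Fin.append (fun i => liftL (Φ₁ i)) (fun i => liftR (Φ₂ i))) (concatE u v) =
      concatE (compChain L₁ Φ₁ u) (compChain L₂ Φ₂ v) := by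
  rw [compChain_add']
  have hc : (fun i => Fin.append (fun i => liftL (h₂ := h₂) (Φ₁ i))
      (fun i => liftR (Φ₂ i)) (Fin.castAdd L₂ i)) = fun i => liftL (Φ₁ i) := by
    funext i; exact Fin.append_left _ _ i
  have hn : (fun i => Fin.append (fun i => liftL (h₂ := h₂) (Φ₁ i))
      (fun i => liftR (Φ₂ i)) (Fin.natAdd L₁ i)) = fun i => liftR (Φ₂ i) := by
    funext i; exact Fin.append_right _ _ i
  rw [hc, hn, compChain_liftL, compChain_liftR]

def pairM {h₁ h₂ : ℕ} (v₁ : EuclideanSpace ℝ (Fin h₁)) (v₂ : EuclideanSpace ℝ (Fin h₂)) :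
    Matrix (Fin (h₁ + h₂)) (Fin (h₁ + h₂)) ℝ :=
  Matrix.of fun i j => concatE v₁ 0 i * concatE v₁ 0 j + concatE 0 v₂ i * concatE 0 v₂ j

lemma matVec_pairM {h₁ h₂ : ℕ} (v₁ : EuclideanSpace ℝ (Fin h₁)) (v₂ : EuclideanSpace ℝ (Fin h₂))
    (x : EuclideanSpace ℝ (Fin (h₁ + h₂))) :
    matVec (pairM v₁ v₂) x =
      concatE ((∑ i, v₁ i * leftE x i) • v₁) ((∑ i, v₂ i * rightE x i) • v₂) := by
  ext j
  refine Fin.addCases (fun i => ?_) (fun i => ?_) j <;>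
  · rw [matVec_apply, Fin.sum_univ_add]
    simp only [pairM, Matrix.of_apply, concatE_left, concatE_right, concatE,
      PiLp.zero_apply, Pi.zero_apply, mul_zero, zero_mul, add_zero, zero_add,
      Fin.append_left, Fin.append_right, PiLp.smul_apply, smul_eq_mul,
      Finset.sum_mul, Finset.mul_sum]
    simp [leftE, rightE, Finset.mul_sum, Finset.sum_mul]
    exact Finset.sum_congr rfl fun k _ => by ring

lemma specNorm_pairM_le {h₁ h₂ : ℕ} {v₁ : EuclideanSpace ℝ (Fin h₁)}
    {v₂ : EuclideanSpace ℝ (Fin h₂)} (hv₁ : ‖v₁‖ = 1) (hv₂ : ‖v₂‖ = 1) :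
    specNorm (pairM v₁ v₂) ≤ 1 := by
  refine specNorm_le_bound _ zero_le_one fun x => ?_
  rw [matVec_pairM]
  set s₁ := ∑ i, v₁ i * leftE x i with hs₁
  set s₂ := ∑ i, v₂ i * rightE x i with hs₂
  have hcs₁ : |s₁| ≤ ‖leftE x‖ := by
    have := abs_real_inner_le_norm v₁ (leftE x)
    rw [hv₁, one_mul] at this
    simpa [PiLp.inner_apply, RCLike.inner_apply, hs₁, mul_comm] using this
  have hcs₂ : |s₂| ≤ ‖rightE x‖ := by
    have := abs_real_inner_le_norm v₂ (rightE x)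
    rw [hv₂, one_mul] at this
    simpa [PiLp.inner_apply, RCLike.inner_apply, hs₂, mul_comm] using this
  have hn : ‖concatE (s₁ • v₁) (s₂ • v₂)‖ ^ 2 ≤ ‖x‖ ^ 2 := by
    rw [norm_sq_concatE, norm_smul, norm_smul, hv₁, hv₂]
    have hx : ‖x‖ ^ 2 = ‖leftE x‖ ^ 2 + ‖rightE x‖ ^ 2 := by
      rw [← norm_sq_concatE, concatE_leftE_rightE]
    rw [hx]
    have h1 : ‖s₁‖ ^ 2 ≤ ‖leftE x‖ ^ 2 := by
      rw [Real.norm_eq_abs]; exact pow_le_pow_left₀ (abs_nonneg _) hcs₁ 2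
    have h2 : ‖s₂‖ ^ 2 ≤ ‖rightE x‖ ^ 2 := by
      rw [Real.norm_eq_abs]; exact pow_le_pow_left₀ (abs_nonneg _) hcs₂ 2
    nlinarith [h1, h2]
  rw [one_mul]
  nlinarith [norm_nonneg (concatE (s₁ • v₁) (s₂ • v₂)), norm_nonneg x, hn]

lemma sum_sum_eq_sq {n : ℕ} (x w : Fin n → ℝ) :
    ∑ j, ∑ k, (x j * w j) * (w k * x k) = (∑ j, x j * w j) ^ 2 := by
  rw [sq, Finset.sum_mul_sum]
  exact Finset.sum_congr rfl fun j _ => Finset.sum_congr rfl fun k _ => by ring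

lemma pairM_posSemidef {h₁ h₂ : ℕ} (v₁ : EuclideanSpace ℝ (Fin h₁))
    (v₂ : EuclideanSpace ℝ (Fin h₂)) : (pairM v₁ v₂).PosSemidef := by
  rw [Matrix.posSemidef_iff_dotProduct_mulVec]
  constructor
  · ext i j; simp [pairM, Matrix.conjTranspose_apply]; ring
  · intro x
    have key : dotProduct (star x) ((pairM v₁ v₂).mulVec x)
        = (∑ j, x j * concatE v₁ 0 j) ^ 2 + (∑ j, x j * concatE 0 v₂ j) ^ 2 := by
      rw [← sum_sum_eq_sq x (fun j => concatE v₁ 0 j),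
        ← sum_sum_eq_sq x (fun j => concatE 0 v₂ j), ← Finset.sum_add_distrib]
      simp only [pairM, dotProduct, Matrix.mulVec, star_trivial, Matrix.of_apply,
        Finset.mul_sum, ← Finset.sum_add_distrib]
      exact Finset.sum_congr rfl fun j _ => Finset.sum_congr rfl fun k _ => by ring
    rw [key]; positivity

lemma pairM_isSymm {h₁ h₂ : ℕ} (v₁ : EuclideanSpace ℝ (Fin h₁))
    (v₂ : EuclideanSpace ℝ (Fin h₂)) : (pairM v₁ v₂).IsSymm := by
  ext i j; simp [pairM, Matrix.transpose_apply]; ring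

end StmtFiveAux

/-- Two networks in `G_{d,ReLU}(X,ℝ)` can be run in parallel: the pair
`(f(x)v₁, g(x)v₂)` is realised as a symmetric PSD matrix `M` with `‖M‖₂ ≤ 1` applied to a
common chain of residual layers in `E_{h₁+h₂,ReLU}` on the concatenated affine lifting. -/
theorem stmt5 (d : ℕ) (X : Set (EuclideanSpace ℝ (Fin d)))
    (f g : EuclideanSpace ℝ (Fin d) → ℝ) (hf : InG X f) (hg : InG X g) :
    ∃ (L h₁ h₂ : ℕ) (v₁ : EuclideanSpace ℝ (Fin h₁)) (v₂ : EuclideanSpace ℝ (Fin h₂))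
      (Qhat₁ : Matrix (Fin h₁) (Fin d) ℝ) (qhat₁ : EuclideanSpace ℝ (Fin h₁))
      (Qhat₂ : Matrix (Fin h₂) (Fin d) ℝ) (qhat₂ : EuclideanSpace ℝ (Fin h₂))
      (Φ : Fin L → (EuclideanSpace ℝ (Fin (h₁ + h₂)) → EuclideanSpace ℝ (Fin (h₁ + h₂))))
      (M : Matrix (Fin (h₁ + h₂)) (Fin (h₁ + h₂)) ℝ),
      ‖v₁‖ = 1 ∧ ‖v₂‖ = 1 ∧ (∀ ℓ, IsEulerStep (Φ ℓ)) ∧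
      M.IsSymm ∧ M.PosSemidef ∧ specNorm M ≤ 1 ∧
      ∀ x ∈ X,
        concatE (f x • v₁) (g x • v₂) =
          matVec M (compChain L Φ (concatE (matVec Qhat₁ x + qhat₁) (matVec Qhat₂ x + qhat₂))) := by
  obtain ⟨hlf, h₁, L₁, Q₁, q₁, Φ₁, v₁, hΦ₁, hv₁, hf₁⟩ := hf
  obtain ⟨hlg, h₂, L₂, Q₂, q₂, Φ₂, v₂, hΦ₂, hv₂, hg₁⟩ := hg
  refine ⟨L₁ + L₂, h₁, h₂, v₁, v₂, Q₁, q₁, Q₂, q₂,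
    Fin.append (fun i => liftL (Φ₁ i)) (fun i => liftR (Φ₂ i)), pairM v₁ v₂,
    hv₁, hv₂, ?_, pairM_isSymm v₁ v₂, pairM_posSemidef v₁ v₂,
    specNorm_pairM_le hv₁ hv₂, ?_⟩
  · intro ℓ
    refine Fin.addCases (fun i => ?_) (fun i => ?_) ℓ
    · rw [Fin.append_left]; exact isEulerStep_liftL (hΦ₁ i)
    · rw [Fin.append_right]; exact isEulerStep_liftR (hΦ₂ i)
  · intro x hx
    rw [compChain_pair, matVec_pairM]
    simp only [leftE_concatE, rightE_concatE]
    rw [hf₁ x hx, hg₁ x hx]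
end

section
/- Let d, k ∈ ℕ, l₁, …, l_k ∈ ℕ, and let a_{i,j} ∈ ℝ^d with ‖a_{i,j}‖₂ ≤ 1 and b_{i,j} ∈ ℝ for i = 1,…,k, j = 1,…,l_i. Define the piecewise affine 1-Lipschitz function f(x) = max_{1≤i≤k} min_{1≤j≤l_i} (a_{i,j}ᵀ x + b_{i,j}). Then f can be represented exactly by a network in the fixed-width class tilde-G_{d,σ,h}(ℝ^d,ℝ) with σ = ReLU and h = d + 3: there exist L ∈ ℕ, Q ∈ R_{d,m}, affine maps A₁,…,A_{L−1} ∈ L_m, layers Φ₁,…,Φ_L ∈ Ẽ_{d,σ}, and v ∈ ℝ^{d+3} with ‖v‖₁ ≤ 1, such that f(x) = vᵀ (Φ_L ∘ A_{L−1} ∘ ⋯ ∘ A₁ ∘ Φ₁ ∘ Q)(x) for all x ∈ ℝ^d. -/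
open scoped BigOperators

namespace Aux

/-- Reinterpret a plain function as an element of Euclidean space. -/
def toE {h : ℕ} (f : Fin h → ℝ) : EuclideanSpace ℝ (Fin h) := WithLp.toLp 2 f

lemma matVec_apply {k h : ℕ} (W : Matrix (Fin k) (Fin h) ℝ) (x : EuclideanSpace ℝ (Fin h))
    (i : Fin k) : matVec W x i = ∑ j, W i j * x j := by
  simp [matVec, Matrix.toEuclideanLin_apply, Matrix.mulVec, dotProduct]

lemma specNorm_le {k h : ℕ} (W : Matrix (Fin k) (Fin h) ℝ) {c : ℝ} (hc : 0 ≤ c)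
    (H : ∀ x, ‖matVec W x‖ ≤ c * ‖x‖) : specNorm W ≤ c :=
  ContinuousLinearMap.opNorm_le_bound _ hc H

lemma specNorm_zero {k h : ℕ} {W : Matrix (Fin k) (Fin h) ℝ} (hW : ∀ i j, W i j = 0) :
    specNorm W ≤ 0 := by
  refine specNorm_le W le_rfl fun x => ?_
  have : matVec W x = 0 := by
    ext i
    simp [matVec_apply, hW]
  simp [this]

lemma specNorm_id {n : ℕ} {W : Matrix (Fin n) (Fin n) ℝ}
    (hW : ∀ i j, W i j = if i = j then 1 else 0) : specNorm W ≤ 1 := by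
  refine specNorm_le W zero_le_one fun x => ?_
  have : matVec W x = x := by
    ext i
    simp [matVec_apply, hW]
  simp [this]

lemma specNorm_row {h : ℕ} (W : Matrix (Fin 1) (Fin h) ℝ) :
    specNorm W ≤ ‖toE (fun j => W 0 j)‖ := by
  refine specNorm_le W (norm_nonneg _) fun x => ?_
  have h1 : ‖matVec W x‖ = |matVec W x 0| := by
    rw [EuclideanSpace.norm_eq]
    simp [Fin.sum_univ_one, Real.sqrt_sq_eq_abs]
  rw [h1]
  have h2 : matVec W x 0
      = @inner ℝ (EuclideanSpace ℝ (Fin h)) _ (toE (fun j => W 0 j)) x := by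
    rw [matVec_apply]
    simp [PiLp.inner_apply, RCLike.inner_apply, toE]
    exact Finset.sum_congr rfl fun _ _ => mul_comm _ _
  rw [h2]
  exact abs_real_inner_le_norm (F := EuclideanSpace ℝ (Fin h)) _ _

lemma norm_single_eq {h : ℕ} (t : Fin h) (c : ℝ) :
    ‖toE (fun j => if j = t then c else 0)‖ = |c| := by
  rw [EuclideanSpace.norm_eq (𝕜 := ℝ) (toE (fun j => if j = t then c else 0))]
  show √(∑ j : Fin h, ‖(if j = t then c else 0 : ℝ)‖ ^ 2) = _
  have : ∀ j : Fin h, ‖(if j = t then c else 0 : ℝ)‖ ^ 2 = if j = t then c ^ 2 else 0 := by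
    intro j; split <;> simp [Real.norm_eq_abs, sq_abs]
  simp only [this, Finset.sum_ite_eq', Finset.mem_univ, if_true]
  exact Real.sqrt_sq_eq_abs c



section
variable {d : ℕ}

abbrev S (d : ℕ) := EuclideanSpace ℝ (Fin (d+3))
abbrev X (d : ℕ) := EuclideanSpace ℝ (Fin d)

def f0 : Fin (d+3) := ⟨0, by omega⟩
def f1 : Fin (d+3) := ⟨1, by omega⟩
def f2 : Fin (d+3) := ⟨2, by omega⟩

lemma isEulerStep_id {h : ℕ} :
    IsEulerStep (id : EuclideanSpace ℝ (Fin h) → EuclideanSpace ℝ (Fin h)) := by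
  refine ⟨0, 0, 0, 0, le_rfl, by norm_num, ?_, fun x => ?_⟩
  · exact le_trans (specNorm_zero (fun i j => by simp)) zero_le_one
  · simp

def T : S d → S d := tildeLayer id

lemma isTildeLayer_T : IsTildeLayer (T (d := d)) := ⟨id, isEulerStep_id, fun _ => rfl⟩

lemma T_apply0 (x : S d) : T x f0 = max (x f0) (x f1) := rfl

lemma T_apply1 (x : S d) : T x f1 = min (x f0) (x f1) := rfl

lemma T_apply2 (x : S d) : T x f2 = x f2 := rfl

lemma T_applyT (x : S d) (t : Fin d) : T x (embT t) = x (embT t) := rfl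

end

section
variable {d : ℕ}

inductive Instr (d : ℕ) : Type
  | load (av : EuclideanSpace ℝ (Fin d)) (c : ℝ)
  | minI (av : EuclideanSpace ℝ (Fin d)) (c : ℝ)
  | maxF
  | maxL

def eR (t : ℕ) : Fin (d+3) → ℝ := fun j => if (j : ℕ) = t then 1 else 0

def tR (av : EuclideanSpace ℝ (Fin d)) : Fin (d+3) → ℝ :=
  fun j => if h : 3 ≤ (j : ℕ) then av ⟨(j : ℕ) - 3, by have := j.isLt; omega⟩ else 0

def zR : Fin (d+3) → ℝ := fun _ => 0

def mkMat (r0 r1 r2 : Fin (d+3) → ℝ) : Matrix (Fin (d+3)) (Fin (d+3)) ℝ :=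
  fun i j => if (i : ℕ) = 0 then r0 j else if (i : ℕ) = 1 then r1 j
    else if (i : ℕ) = 2 then r2 j else if (j : ℕ) = (i : ℕ) then 1 else 0

def mkVec (c0 c1 : ℝ) : S d :=
  toE (fun j => if (j : ℕ) = 0 then c0 else if (j : ℕ) = 1 then c1 else 0)

def instrMat : Instr d → Matrix (Fin (d+3)) (Fin (d+3)) ℝ
  | .load av _ => mkMat (tR av) (tR av) (eR 0)
  | .minI av _ => mkMat (tR av) (eR 1) (eR 2)
  | .maxF => mkMat (eR 1) (eR 1) zR
  | .maxL => mkMat (eR 1) (eR 2) zR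

def instrVec : Instr d → S d
  | .load _ c => mkVec c c
  | .minI _ c => mkVec c 0
  | .maxF => mkVec 0 0
  | .maxL => mkVec 0 0

noncomputable def stepI (I : Instr d) (s : S d) : S d := T (matVec (instrMat I) s + instrVec I)

noncomputable def execF : (L : ℕ) → (Fin L → Instr d) → S d → S d
  | 0, _, s => s
  | L+1, p, s => stepI (p (Fin.last L)) (execF L (fun i => p i.castSucc) s)

/-! ### Row sums -/

lemma sum_eR_mul (t : Fin (d+3)) (s : S d) : ∑ j, eR (t : ℕ) j * s j = s t := by
  rw [Finset.sum_eq_single_of_mem t (Finset.mem_univ t)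
    (fun j _ hj => by
      have : (j : ℕ) ≠ (t : ℕ) := fun h' => hj (Fin.ext h')
      simp [eR, this])]
  simp [eR]

lemma sum_tail (f : Fin (d+3) → ℝ) (h0 : ∀ j : Fin (d+3), (j : ℕ) < 3 → f j = 0) :
    ∑ j, f j = ∑ t : Fin d, f (embT t) := by
  rw [← Finset.sum_filter_of_ne (p := fun j : Fin (d+3) => 3 ≤ (j : ℕ))
    (fun x _ hfx => by by_contra hc; exact hfx (h0 x (by omega)))]
  refine Finset.sum_bij'
    (i := fun j hj => (⟨(j : ℕ) - 3, by
      have := j.isLt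
      have h3 : 3 ≤ (j : ℕ) := (Finset.mem_filter.1 hj).2
      omega⟩ : Fin d))
    (j := fun t _ => embT t) ?_ ?_ ?_ ?_ ?_
  · intro a ha; exact Finset.mem_univ _
  · intro t _
    simp only [Finset.mem_filter, Finset.mem_univ, true_and, embT]
    omega
  · intro j hj
    have h3 : 3 ≤ (j : ℕ) := (Finset.mem_filter.1 hj).2
    ext
    simp [embT]
    try omega
  · intro t _
    ext
    simp [embT]
  · intro j hj
    have h3 : 3 ≤ (j : ℕ) := (Finset.mem_filter.1 hj).2
    congr 1
    ext
    simp [embT]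
    try omega

lemma sum_tR_mul (av : EuclideanSpace ℝ (Fin d)) (s : S d) :
    ∑ j, tR av j * s j = ∑ t, av t * s (embT t) := by
  rw [sum_tail (fun j => tR av j * s j) (fun j hj => by
    have : ¬ (3 ≤ (j : ℕ)) := by omega
    simp [tR, this])]
  refine Finset.sum_congr rfl fun t _ => ?_
  have h3 : 3 ≤ ((embT t : Fin (d+3)) : ℕ) := by simp [embT]
  rw [tR, dif_pos h3]
  rfl

lemma sum_zR_mul (s : S d) : ∑ j, zR (d := d) j * s j = 0 := by
  simp [zR]

/-! ### Coordinates of affine application -/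

lemma mkMat_row0 (r0 r1 r2 : Fin (d+3) → ℝ) (j) : mkMat r0 r1 r2 f0 j = r0 j := rfl
lemma mkMat_row1 (r0 r1 r2 : Fin (d+3) → ℝ) (j) : mkMat r0 r1 r2 f1 j = r1 j := rfl
lemma mkMat_row2 (r0 r1 r2 : Fin (d+3) → ℝ) (j) : mkMat r0 r1 r2 f2 j = r2 j := rfl
lemma mkMat_rowT (r0 r1 r2 : Fin (d+3) → ℝ) (t : Fin d) (j) :
    mkMat r0 r1 r2 (embT t) j = eR ((embT t : Fin (d+3)) : ℕ) j := rfl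

lemma matVec_mkMat0 (r0 r1 r2 : Fin (d+3) → ℝ) (s : S d) :
    matVec (mkMat r0 r1 r2) s f0 = ∑ j, r0 j * s j := by
  rw [matVec_apply]; rfl

lemma matVec_mkMat1 (r0 r1 r2 : Fin (d+3) → ℝ) (s : S d) :
    matVec (mkMat r0 r1 r2) s f1 = ∑ j, r1 j * s j := by
  rw [matVec_apply]; rfl

lemma matVec_mkMat2 (r0 r1 r2 : Fin (d+3) → ℝ) (s : S d) :
    matVec (mkMat r0 r1 r2) s f2 = ∑ j, r2 j * s j := by
  rw [matVec_apply]; rfl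

lemma matVec_mkMatT (r0 r1 r2 : Fin (d+3) → ℝ) (s : S d) (t : Fin d) :
    matVec (mkMat r0 r1 r2) s (embT t) = s (embT t) := by
  rw [matVec_apply]
  have : ∀ j, mkMat r0 r1 r2 (embT t) j = eR ((embT t : Fin (d+3)) : ℕ) j := fun j => rfl
  simp only [this]
  exact sum_eR_mul (embT t) s

lemma mkVec_0 (c0 c1 : ℝ) : (mkVec c0 c1 : S d) f0 = c0 := rfl
lemma mkVec_1 (c0 c1 : ℝ) : (mkVec c0 c1 : S d) f1 = c1 := rfl
lemma mkVec_2 (c0 c1 : ℝ) : (mkVec c0 c1 : S d) f2 = 0 := rfl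
lemma mkVec_T (c0 c1 : ℝ) (t : Fin d) : (mkVec c0 c1 : S d) (embT t) = 0 := rfl

end

section
variable {d : ℕ}

/-! ### Norm bounds -/

lemma norm_const1 (c : ℝ) : ‖toE (fun _ : Fin 1 => c)‖ = |c| := by
  rw [EuclideanSpace.norm_eq (𝕜 := ℝ) (toE (fun _ : Fin 1 => c))]
  show √(∑ _j : Fin 1, ‖c‖ ^ 2) = _
  simp [Real.sqrt_sq_eq_abs, Real.norm_eq_abs, sq_abs]

lemma spec11 (W : Matrix (Fin 1) (Fin 1) ℝ) : specNorm W ≤ |W 0 0| := by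
  refine le_trans (specNorm_row W) (le_of_eq ?_)
  have : (fun j => W 0 j) = fun _ : Fin 1 => W 0 0 := by
    funext j
    congr 1
    exact Subsingleton.elim _ _
  rw [show toE (fun j => W 0 j) = toE (fun _ : Fin 1 => W 0 0) from congrArg toE this]
  exact norm_const1 _

lemma rowBlockSum_mk (e : Fin 1 → Fin (d+3)) (r0 r1 r2 r : Fin (d+3) → ℝ)
    (hr : ∀ j, mkMat r0 r1 r2 (e 0) j = r j) :
    rowBlockSum (mkMat r0 r1 r2) e
      ≤ |r f0| + |r f1| + |r f2| + ‖toE (fun t : Fin d => r (embT t))‖ := by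
  have key : ∀ (em : Fin 1 → Fin (d+3)) (v : ℝ), r (em 0) = v →
      specNorm ((mkMat r0 r1 r2).submatrix e em) ≤ |v| := by
    intro em v hv
    refine le_trans (spec11 _) (le_of_eq ?_)
    show |mkMat r0 r1 r2 (e 0) (em 0)| = _
    rw [hr, hv]
  refine add_le_add (add_le_add (add_le_add ?_ ?_) ?_) ?_
  · exact key emb0 (r f0) rfl
  · exact key emb1 (r f1) rfl
  · exact key emb2 (r f2) rfl
  · refine le_trans (specNorm_row _) (le_of_eq ?_)
    congr 1
    ext t
    show mkMat r0 r1 r2 (e 0) (embT t) = r (embT t)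
    exact hr _

lemma rowBound_tR (av : EuclideanSpace ℝ (Fin d)) (hav : ‖av‖ ≤ 1) :
    |tR av f0| + |tR av f1| + |tR av f2| + ‖toE (fun t : Fin d => tR av (embT t))‖ ≤ 1 := by
  have h0 : tR av f0 = 0 := rfl
  have h1 : tR av f1 = 0 := rfl
  have h2 : tR av f2 = 0 := rfl
  have hT : toE (fun t : Fin d => tR av (embT t)) = av := by
    ext t
    show tR av (embT t) = av t
    rw [tR, dif_pos (show (3:ℕ) ≤ ((embT t : Fin (d+3)) : ℕ) by simp [embT])]
    rfl
  rw [h0, h1, h2, hT]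
  simpa using hav

lemma rowBound_eR (m : ℕ) (hm : m < 3) :
    |eR (d := d) m f0| + |eR (d := d) m f1| + |eR (d := d) m f2|
      + ‖toE (fun t : Fin d => eR (d := d) m (embT t))‖ ≤ 1 := by
  have hT : toE (fun t : Fin d => eR (d := d) m (embT t)) = (0 : EuclideanSpace ℝ (Fin d)) := by
    ext t
    show (if (t : ℕ) + 3 = m then (1:ℝ) else 0) = 0
    have : ¬ ((t : ℕ) + 3 = m) := by omega
    rw [if_neg this]
  rw [hT, norm_zero, add_zero]
  have e0 : eR (d := d) m f0 = if 0 = m then (1:ℝ) else 0 := rfl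
  have e1 : eR (d := d) m f1 = if 1 = m then (1:ℝ) else 0 := rfl
  have e2 : eR (d := d) m f2 = if 2 = m then (1:ℝ) else 0 := rfl
  rw [e0, e1, e2]
  interval_cases m <;> norm_num

lemma rowBound_zR :
    |zR (d := d) f0| + |zR (d := d) f1| + |zR (d := d) f2|
      + ‖toE (fun t : Fin d => zR (d := d) (embT t))‖ ≤ 1 := by
  have hT : toE (fun t : Fin d => zR (d := d) (embT t)) = (0 : EuclideanSpace ℝ (Fin d)) := rfl
  rw [hT]
  simp [zR]

lemma rowBlockSum_mk_tail (r0 r1 r2 : Fin (d+3) → ℝ) :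
    rowBlockSum (mkMat r0 r1 r2) embT ≤ 1 := by
  have z : ∀ (em : Fin 1 → Fin (d+3)), ((em 0 : Fin (d+3)) : ℕ) < 3 →
      specNorm ((mkMat r0 r1 r2).submatrix embT em) ≤ 0 := by
    intro em hem
    refine specNorm_zero fun i j => ?_
    show mkMat r0 r1 r2 (embT i) (em j) = 0
    have hi : ((embT i : Fin (d+3)) : ℕ) = (i : ℕ) + 3 := rfl
    have hne : ¬ ((em j : Fin (d+3)) : ℕ) = ((embT i : Fin (d+3)) : ℕ) := by
      have : em j = em 0 := by congr 1; exact Subsingleton.elim _ _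
      rw [this, hi]
      omega
    show (if ((em j : Fin (d+3)) : ℕ) = ((embT i : Fin (d+3)) : ℕ) then (1:ℝ) else 0) = 0
    rw [if_neg hne]
  have idpart : specNorm ((mkMat r0 r1 r2).submatrix embT embT) ≤ 1 := by
    refine specNorm_id fun i j => ?_
    show (if ((embT j : Fin (d+3)) : ℕ) = ((embT i : Fin (d+3)) : ℕ) then (1:ℝ) else 0)
      = if i = j then 1 else 0
    by_cases h : i = j
    · subst h; simp
    · have hne : ¬ ((j : ℕ) + 3 = (i : ℕ) + 3) := by
        intro hc
        exact h (Fin.ext (by omega)).symm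
      rw [show ((embT j : Fin (d+3)) : ℕ) = (j : ℕ) + 3 from rfl,
        show ((embT i : Fin (d+3)) : ℕ) = (i : ℕ) + 3 from rfl, if_neg hne, if_neg h]
  have b0 := z emb0 (by simp [emb0])
  have b1 := z emb1 (by simp [emb1])
  have b2 := z emb2 (by simp [emb2])
  unfold rowBlockSum
  linarith

lemma memLm_mk (r0 r1 r2 : Fin (d+3) → ℝ)
    (H0 : |r0 f0| + |r0 f1| + |r0 f2| + ‖toE (fun t : Fin d => r0 (embT t))‖ ≤ 1)
    (H1 : |r1 f0| + |r1 f1| + |r1 f2| + ‖toE (fun t : Fin d => r1 (embT t))‖ ≤ 1)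
    (H2 : |r2 f0| + |r2 f1| + |r2 f2| + ‖toE (fun t : Fin d => r2 (embT t))‖ ≤ 1) :
    memLm (mkMat r0 r1 r2) := by
  exact ⟨le_trans (rowBlockSum_mk emb0 r0 r1 r2 r0 fun j => rfl) H0,
    le_trans (rowBlockSum_mk emb1 r0 r1 r2 r1 fun j => rfl) H1,
    le_trans (rowBlockSum_mk emb2 r0 r1 r2 r2 fun j => rfl) H2,
    rowBlockSum_mk_tail r0 r1 r2⟩

end

section
variable {d : ℕ}

lemma memLm_instr (I : Instr d) (hI : ∀ av c, (I = .load av c ∨ I = .minI av c) → ‖av‖ ≤ 1) :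
    memLm (instrMat I) := by
  cases I with
  | load av c =>
    have hav : ‖av‖ ≤ 1 := hI av c (Or.inl rfl)
    exact memLm_mk _ _ _ (rowBound_tR av hav) (rowBound_tR av hav) (rowBound_eR 0 (by norm_num))
  | minI av c =>
    have hav : ‖av‖ ≤ 1 := hI av c (Or.inr rfl)
    exact memLm_mk _ _ _ (rowBound_tR av hav) (rowBound_eR 1 (by norm_num))
      (rowBound_eR 2 (by norm_num))
  | maxF =>
    exact memLm_mk _ _ _ (rowBound_eR 1 (by norm_num)) (rowBound_eR 1 (by norm_num)) rowBound_zR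
  | maxL =>
    exact memLm_mk _ _ _ (rowBound_eR 1 (by norm_num)) (rowBound_eR 2 (by norm_num)) rowBound_zR

/-! ### The input map Q -/

def Qmat (d : ℕ) : Matrix (Fin (d+3)) (Fin d) ℝ :=
  fun i j => if (i : ℕ) ≤ 2 then 0 else if (j : ℕ) + 3 = (i : ℕ) then 1 else 0

lemma memRm_Qmat : memRm (Qmat d) := by
  have z : ∀ (em : Fin 1 → Fin (d+3)), ((em 0 : Fin (d+3)) : ℕ) ≤ 2 →
      specNorm ((Qmat d).submatrix em id) ≤ 1 := by
    intro em hem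
    refine le_trans (specNorm_zero fun i j => ?_) zero_le_one
    show Qmat d (em i) (id j) = 0
    have : em i = em 0 := by congr 1; exact Subsingleton.elim _ _
    rw [this, Qmat, if_pos hem]
  refine ⟨z emb0 (by simp [emb0]), z emb1 (by simp [emb1]), z emb2 (by simp [emb2]), ?_⟩
  refine specNorm_id fun i j => ?_
  show Qmat d (embT i) j = _
  rw [Qmat]
  have h2 : ¬ (((embT i : Fin (d+3)) : ℕ) ≤ 2) := by simp [embT]
  rw [if_neg h2]
  by_cases h : i = j
  · subst h
    rw [show ((embT i : Fin (d+3)) : ℕ) = (i : ℕ) + 3 from rfl]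
    simp
  · have hne : ¬ ((j : ℕ) + 3 = ((embT i : Fin (d+3)) : ℕ)) := by
      rw [show ((embT i : Fin (d+3)) : ℕ) = (i : ℕ) + 3 from rfl]
      intro hc
      exact h (Fin.ext (by omega)).symm
    rw [if_neg hne, if_neg h]

lemma matVec_Qmat_tail (x : X d) (t : Fin d) : matVec (Qmat d) x (embT t) = x t := by
  have h2 : ¬ (((embT t : Fin (d+3)) : ℕ) ≤ 2) := by simp [embT]
  have hmain : ∀ j : Fin d, j ≠ t → Qmat d (embT t) j * x j = 0 := by
    intro j hj
    have hne : ¬ ((j : ℕ) + 3 = ((embT t : Fin (d+3)) : ℕ)) := by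
      rw [show ((embT t : Fin (d+3)) : ℕ) = (t : ℕ) + 3 from rfl]
      intro hc
      exact hj (Fin.ext (by omega))
    rw [Qmat, if_neg h2, if_neg hne, zero_mul]
  rw [matVec_apply]
  rw [Finset.sum_eq_single_of_mem t (Finset.mem_univ t) (fun j _ hj => hmain j hj)]
  rw [Qmat, if_neg h2, if_pos (show (t:ℕ) + 3 = ((embT t : Fin (d+3)) : ℕ) from rfl), one_mul]

/-! ### Step semantics -/

def gv (av : EuclideanSpace ℝ (Fin d)) (c : ℝ) (x : X d) : ℝ := (∑ t, av t * x t) + c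

lemma sum_tR_x (av : EuclideanSpace ℝ (Fin d)) (s : S d) (x : X d)
    (hs : ∀ t, s (embT t) = x t) : ∑ j, tR av j * s j = ∑ t, av t * x t := by
  rw [sum_tR_mul]
  exact Finset.sum_congr rfl fun t _ => by rw [hs t]

lemma step_load (av : EuclideanSpace ℝ (Fin d)) (c : ℝ) (s : S d) (x : X d)
    (hs : ∀ t, s (embT t) = x t) :
    stepI (.load av c) s f0 = gv av c x ∧ stepI (.load av c) s f1 = gv av c x ∧
    stepI (.load av c) s f2 = s f0 ∧ ∀ t, stepI (.load av c) s (embT t) = x t := by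
  set u := matVec (instrMat (Instr.load av c)) s + instrVec (Instr.load av c) with hu
  have h0 : u f0 = gv av c x := by
    rw [hu]
    show matVec (mkMat (tR av) (tR av) (eR 0)) s f0 + (mkVec c c : S d) f0 = _
    rw [matVec_mkMat0, mkVec_0, sum_tR_x av s x hs, gv]
  have h1 : u f1 = gv av c x := by
    rw [hu]
    show matVec (mkMat (tR av) (tR av) (eR 0)) s f1 + (mkVec c c : S d) f1 = _
    rw [matVec_mkMat1, mkVec_1, sum_tR_x av s x hs, gv]
  have h2 : u f2 = s f0 := by
    rw [hu]
    show matVec (mkMat (tR av) (tR av) (eR 0)) s f2 + (mkVec c c : S d) f2 = _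
    rw [matVec_mkMat2, mkVec_2, add_zero]
    exact sum_eR_mul f0 s
  have hT : ∀ t, u (embT t) = x t := fun t => by
    rw [hu]
    show matVec (mkMat (tR av) (tR av) (eR 0)) s (embT t) + (mkVec c c : S d) (embT t) = _
    rw [matVec_mkMatT, mkVec_T, add_zero, hs]
  refine ⟨?_, ?_, ?_, fun t => ?_⟩
  · show T u f0 = _
    rw [T_apply0, h0, h1, max_self]
  · show T u f1 = _
    rw [T_apply1, h0, h1, min_self]
  · show T u f2 = _
    rw [T_apply2, h2]
  · show T u (embT t) = _
    rw [T_applyT, hT]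

lemma step_min (av : EuclideanSpace ℝ (Fin d)) (c : ℝ) (s : S d) (x : X d)
    (hs : ∀ t, s (embT t) = x t) :
    stepI (.minI av c) s f1 = min (gv av c x) (s f1) ∧
    stepI (.minI av c) s f2 = s f2 ∧ ∀ t, stepI (.minI av c) s (embT t) = x t := by
  set u := matVec (instrMat (Instr.minI av c)) s + instrVec (Instr.minI av c) with hu
  have h0 : u f0 = gv av c x := by
    rw [hu]
    show matVec (mkMat (tR av) (eR 1) (eR 2)) s f0 + (mkVec c 0 : S d) f0 = _
    rw [matVec_mkMat0, mkVec_0, sum_tR_x av s x hs, gv]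
  have h1 : u f1 = s f1 := by
    rw [hu]
    show matVec (mkMat (tR av) (eR 1) (eR 2)) s f1 + (mkVec c 0 : S d) f1 = _
    rw [matVec_mkMat1, mkVec_1, add_zero]
    exact sum_eR_mul f1 s
  have h2 : u f2 = s f2 := by
    rw [hu]
    show matVec (mkMat (tR av) (eR 1) (eR 2)) s f2 + (mkVec c 0 : S d) f2 = _
    rw [matVec_mkMat2, mkVec_2, add_zero]
    exact sum_eR_mul f2 s
  have hT : ∀ t, u (embT t) = x t := fun t => by
    rw [hu]
    show matVec (mkMat (tR av) (eR 1) (eR 2)) s (embT t) + (mkVec c 0 : S d) (embT t) = _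
    rw [matVec_mkMatT, mkVec_T, add_zero, hs]
  refine ⟨?_, ?_, fun t => ?_⟩
  · show T u f1 = _
    rw [T_apply1, h0, h1]
  · show T u f2 = _
    rw [T_apply2, h2]
  · show T u (embT t) = _
    rw [T_applyT, hT]

lemma step_maxF (s : S d) (x : X d) (hs : ∀ t, s (embT t) = x t) :
    stepI .maxF s f0 = s f1 ∧ ∀ t, stepI .maxF s (embT t) = x t := by
  set u := matVec (instrMat (Instr.maxF (d := d))) s + instrVec (Instr.maxF (d := d)) with hu
  have h0 : u f0 = s f1 := by
    rw [hu]
    show matVec (mkMat (eR 1) (eR 1) zR) s f0 + (mkVec 0 0 : S d) f0 = _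
    rw [matVec_mkMat0, mkVec_0, add_zero]
    exact sum_eR_mul f1 s
  have h1 : u f1 = s f1 := by
    rw [hu]
    show matVec (mkMat (eR 1) (eR 1) zR) s f1 + (mkVec 0 0 : S d) f1 = _
    rw [matVec_mkMat1, mkVec_1, add_zero]
    exact sum_eR_mul f1 s
  have hT : ∀ t, u (embT t) = x t := fun t => by
    rw [hu]
    show matVec (mkMat (eR 1) (eR 1) zR) s (embT t) + (mkVec 0 0 : S d) (embT t) = _
    rw [matVec_mkMatT, mkVec_T, add_zero, hs]
  refine ⟨?_, fun t => ?_⟩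
  · show T u f0 = _
    rw [T_apply0, h0, h1, max_self]
  · show T u (embT t) = _
    rw [T_applyT, hT]

lemma step_maxL (s : S d) (x : X d) (hs : ∀ t, s (embT t) = x t) :
    stepI .maxL s f0 = max (s f1) (s f2) ∧ ∀ t, stepI .maxL s (embT t) = x t := by
  set u := matVec (instrMat (Instr.maxL (d := d))) s + instrVec (Instr.maxL (d := d)) with hu
  have h0 : u f0 = s f1 := by
    rw [hu]
    show matVec (mkMat (eR 1) (eR 2) zR) s f0 + (mkVec 0 0 : S d) f0 = _
    rw [matVec_mkMat0, mkVec_0, add_zero]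
    exact sum_eR_mul f1 s
  have h1 : u f1 = s f2 := by
    rw [hu]
    show matVec (mkMat (eR 1) (eR 2) zR) s f1 + (mkVec 0 0 : S d) f1 = _
    rw [matVec_mkMat1, mkVec_1, add_zero]
    exact sum_eR_mul f2 s
  have hT : ∀ t, u (embT t) = x t := fun t => by
    rw [hu]
    show matVec (mkMat (eR 1) (eR 2) zR) s (embT t) + (mkVec 0 0 : S d) (embT t) = _
    rw [matVec_mkMatT, mkVec_T, add_zero, hs]
  refine ⟨?_, fun t => ?_⟩
  · show T u f0 = _
    rw [T_apply0, h0, h1]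
  · show T u (embT t) = _
    rw [T_applyT, hT]

end

section
variable {d : ℕ}

def fapp {α : Type*} {L₁ L₂ : ℕ} (p₁ : Fin L₁ → α) (p₂ : Fin L₂ → α) : Fin (L₁ + L₂) → α :=
  fun j => if h : (j : ℕ) < L₁ then p₁ ⟨j, h⟩
    else p₂ ⟨(j : ℕ) - L₁, by have := j.isLt; omega⟩

lemma fapp_cast {α : Type*} {L₁ L₂ : ℕ} (p₁ : Fin L₁ → α) (p₂ : Fin (L₂+1) → α) :
    (fun i : Fin (L₁+L₂) => fapp p₁ p₂ i.castSucc) = fapp p₁ (fun i => p₂ i.castSucc) := by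
  funext i
  simp only [fapp, Fin.coe_castSucc]
  by_cases h : (i : ℕ) < L₁
  · rw [dif_pos h, dif_pos h]
  · rw [dif_neg h, dif_neg h]
    apply congrArg p₂
    ext
    simp

lemma fapp_last {α : Type*} {L₁ L₂ : ℕ} (p₁ : Fin L₁ → α) (p₂ : Fin (L₂+1) → α) :
    fapp p₁ p₂ (Fin.last (L₁+L₂)) = p₂ (Fin.last L₂) := by
  have hcond : ¬ (((Fin.last (L₁+L₂) : Fin (L₁+L₂+1)) : ℕ) < L₁) := by
    rw [Fin.val_last]; omega
  rw [fapp]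
  rw [dif_neg hcond]
  apply congrArg p₂
  ext
  simp only [Fin.val_last]
  omega

lemma execF_append {L₁ : ℕ} (p₁ : Fin L₁ → Instr d) (s : S d) :
    ∀ (L₂ : ℕ) (p₂ : Fin L₂ → Instr d),
      execF (L₁ + L₂) (fapp p₁ p₂) s = execF L₂ p₂ (execF L₁ p₁ s) := by
  intro L₂
  induction L₂ with
  | zero =>
    intro p₂
    show execF L₁ (fapp p₁ p₂) s = execF L₁ p₁ s
    exact congrArg (fun q => execF L₁ q s) (funext fun j => dif_pos j.isLt)
  | succ n ih =>
    intro p₂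
    calc execF (L₁ + (n+1)) (fapp p₁ p₂) s
        = stepI (fapp p₁ p₂ (Fin.last (L₁+n)))
            (execF (L₁+n) (fun i => fapp p₁ p₂ i.castSucc) s) := rfl
      _ = stepI (p₂ (Fin.last n))
            (execF (L₁+n) (fapp p₁ (fun i => p₂ i.castSucc)) s) := by
            rw [fapp_cast, fapp_last]
      _ = stepI (p₂ (Fin.last n)) (execF n (fun i => p₂ i.castSucc) (execF L₁ p₁ s)) := by
            rw [ih]
      _ = execF (n+1) p₂ (execF L₁ p₁ s) := rfl

lemma altChain_execF : ∀ (L : ℕ) (p : Fin L → Instr d) (x : S d),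
    altChain L (fun _ => T (d := d)) (fun ℓ u => matVec (instrMat (p ℓ)) u + instrVec (p ℓ)) x
      = execF L p (T x) := by
  intro L
  induction L with
  | zero => intro p x; rfl
  | succ n ih =>
    intro p x
    calc altChain (n+1) (fun _ => T (d := d))
          (fun ℓ u => matVec (instrMat (p ℓ)) u + instrVec (p ℓ)) x
        = stepI (p (Fin.last n)) (altChain n (fun _ => T (d := d))
            (fun ℓ u => matVec (instrMat (p ℓ.castSucc)) u + instrVec (p ℓ.castSucc)) x) := rfl
      _ = stepI (p (Fin.last n)) (execF n (fun i => p i.castSucc) (T x)) := by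
            rw [ih (fun i => p i.castSucc) x]
      _ = execF (n+1) p (T x) := rfl

/-! ### Finset helpers -/

lemma filter_lt_one {k : ℕ} (hk : 0 < k) :
    Finset.univ.filter (fun i : Fin k => (i : ℕ) < 1) = {(⟨0, hk⟩ : Fin k)} := by
  ext i
  simp [Fin.ext_iff]
  try omega

lemma filter_succ {k : ℕ} (n : ℕ) (hn : n < k) :
    Finset.univ.filter (fun i : Fin k => (i : ℕ) < n+1)
      = insert (⟨n, hn⟩ : Fin k) (Finset.univ.filter (fun i : Fin k => (i : ℕ) < n)) := by
  ext i
  simp [Fin.ext_iff]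
  try omega

lemma filter_all {k : ℕ} :
    Finset.univ.filter (fun i : Fin k => (i : ℕ) < k) = Finset.univ := by
  ext i
  simp [i.isLt]

end

section
variable {d k : ℕ} {l : Fin k → ℕ}
  (a : (i : Fin k) → Fin (l i) → EuclideanSpace ℝ (Fin d))
  (b : (i : Fin k) → Fin (l i) → ℝ)

lemma memLm_fapp {L₁ L₂ : ℕ} {p₁ : Fin L₁ → Instr d} {p₂ : Fin L₂ → Instr d}
    (h₁ : ∀ ℓ, memLm (instrMat (p₁ ℓ))) (h₂ : ∀ ℓ, memLm (instrMat (p₂ ℓ))) :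
    ∀ ℓ, memLm (instrMat (fapp p₁ p₂ ℓ)) := by
  intro ℓ
  by_cases h : (ℓ : ℕ) < L₁
  · rw [show fapp p₁ p₂ ℓ = p₁ ⟨ℓ, h⟩ from dif_pos h]
    exact h₁ _
  · rw [show fapp p₁ p₂ ℓ = p₂ ⟨(ℓ : ℕ) - L₁, by have := ℓ.isLt; omega⟩ from dif_neg h]
    exact h₂ _

lemma innerRun (ha : ∀ i j, ‖a i j‖ ≤ 1) (i : Fin k) :
    ∀ (m : ℕ), 1 ≤ m → m ≤ l i →
    ∃ (L : ℕ) (p : Fin L → Instr d),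
      (∀ ℓ, memLm (instrMat (p ℓ))) ∧
      ∀ (s : S d) (x : X d), (∀ t, s (embT t) = x t) →
        (∀ (ne : (Finset.univ.filter (fun j : Fin (l i) => (j : ℕ) < m)).Nonempty),
          execF L p s f1 = (Finset.univ.filter (fun j : Fin (l i) => (j : ℕ) < m)).inf' ne
            (fun j => gv (a i j) (b i j) x)) ∧
        execF L p s f2 = s f0 ∧ ∀ t, execF L p s (embT t) = x t := by
  intro m h1
  induction m, h1 using Nat.le_induction with
  | base =>
    intro hm
    refine ⟨1, fun _ => .load (a i ⟨0, hm⟩) (b i ⟨0, hm⟩), ?_, ?_⟩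
    · intro ℓ
      apply memLm_instr
      intro av c hc
      rcases hc with h | h
      · cases h; exact ha i _
      · cases h
    · intro s x hs
      obtain ⟨e0, e1, e2, eT⟩ := step_load (a i ⟨0, hm⟩) (b i ⟨0, hm⟩) s x hs
      have q1 : execF 1 (fun _ => Instr.load (a i ⟨0, hm⟩) (b i ⟨0, hm⟩)) s f1
          = gv (a i ⟨0, hm⟩) (b i ⟨0, hm⟩) x := e1
      have q2 : execF 1 (fun _ => Instr.load (a i ⟨0, hm⟩) (b i ⟨0, hm⟩)) s f2 = s f0 := e2
      refine ⟨?_, q2, fun t => eT t⟩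
      intro ne
      rw [q1, Finset.inf'_congr ne (filter_lt_one (show 0 < l i by omega)) (fun j _ => rfl),
        Finset.inf'_singleton]
  | succ n hn ih =>
    intro hm
    obtain ⟨L, p, hmem, hsem⟩ := ih (by omega)
    have hn_lt : n < l i := by omega
    set I : Instr d := Instr.minI (a i ⟨n, hn_lt⟩) (b i ⟨n, hn_lt⟩) with hI
    refine ⟨L + 1, fapp p (fun _ => I), memLm_fapp hmem (fun _ => ?_), ?_⟩
    · apply memLm_instr
      intro av c hc
      rcases hc with h | h
      · rw [hI] at h; cases h
      · rw [hI] at h; cases h; exact ha i _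
    · intro s x hs
      obtain ⟨h1', h2', hT'⟩ := hsem s x hs
      set r := execF L p s with hr
      have happ : execF (L + 1) (fapp p (fun _ => I)) s = execF 1 (fun _ => I) r :=
        execF_append p s 1 (fun _ => I)
      obtain ⟨e1, e2, eT⟩ := step_min (a i ⟨n, hn_lt⟩) (b i ⟨n, hn_lt⟩) r x hT'
      have q1 : execF 1 (fun _ : Fin 1 => I) r f1
          = min (gv (a i ⟨n, hn_lt⟩) (b i ⟨n, hn_lt⟩) x) (r f1) := e1
      have q2 : execF 1 (fun _ : Fin 1 => I) r f2 = r f2 := e2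
      have ne_n : (Finset.univ.filter (fun j : Fin (l i) => (j : ℕ) < n)).Nonempty := by
        refine ⟨⟨0, by omega⟩, ?_⟩
        simp only [Finset.mem_filter, Finset.mem_univ, true_and]
        omega
      refine ⟨?_, ?_, fun t => ?_⟩
      · intro ne
        rw [happ, q1, h1' ne_n]
        have hins : (Finset.univ.filter (fun j : Fin (l i) => (j : ℕ) < n + 1)).inf' ne
              (fun j => gv (a i j) (b i j) x)
            = gv (a i ⟨n, hn_lt⟩) (b i ⟨n, hn_lt⟩) x
              ⊓ (Finset.univ.filter (fun j : Fin (l i) => (j : ℕ) < n)).inf' ne_n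
                (fun j => gv (a i j) (b i j) x) := by
          rw [Finset.inf'_congr ne (filter_succ n hn_lt) (fun j _ => rfl)]
          exact Finset.inf'_insert ne_n _
        rw [hins]
      · rw [happ, q2, h2']
      · rw [happ]; exact eT t

lemma outerRun (hl : ∀ i, 0 < l i) (ha : ∀ i j, ‖a i j‖ ≤ 1) :
    ∀ (n : ℕ), 1 ≤ n → n ≤ k →
    ∃ (L : ℕ) (p : Fin L → Instr d),
      (∀ ℓ, memLm (instrMat (p ℓ))) ∧
      ∀ (s : S d) (x : X d), (∀ t, s (embT t) = x t) →
        (∀ (ne : (Finset.univ.filter (fun i : Fin k => (i : ℕ) < n)).Nonempty),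
          execF L p s f0 = (Finset.univ.filter (fun i : Fin k => (i : ℕ) < n)).sup' ne
            (fun i => Finset.univ.inf' ⟨⟨0, hl i⟩, Finset.mem_univ _⟩
              (fun j => gv (a i j) (b i j) x))) ∧
        ∀ t, execF L p s (embT t) = x t := by
  have inner_univ : ∀ (i : Fin k) (x : X d)
      (ne : (Finset.univ.filter (fun j : Fin (l i) => (j : ℕ) < l i)).Nonempty),
      (Finset.univ.filter (fun j : Fin (l i) => (j : ℕ) < l i)).inf' ne
          (fun j => gv (a i j) (b i j) x)
        = Finset.univ.inf' ⟨⟨0, hl i⟩, Finset.mem_univ _⟩ (fun j => gv (a i j) (b i j) x) := by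
    intro i x ne
    rw [Finset.inf'_congr ne filter_all (fun j _ => rfl)]
  have ne_li : ∀ i : Fin k,
      (Finset.univ.filter (fun j : Fin (l i) => (j : ℕ) < l i)).Nonempty := by
    intro i
    refine ⟨⟨0, hl i⟩, ?_⟩
    simp only [Finset.mem_filter, Finset.mem_univ, true_and]
    exact hl i
  intro n h1
  induction n, h1 using Nat.le_induction with
  | base =>
    intro hk1
    have hk : 0 < k := by omega
    obtain ⟨L, p, hmem, hsem⟩ := innerRun a b ha ⟨0, hk⟩ (l ⟨0, hk⟩) (hl _) le_rfl
    refine ⟨L + 1, fapp p (fun _ => Instr.maxF), memLm_fapp hmem (fun _ => ?_), ?_⟩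
    · apply memLm_instr
      intro av c hc
      rcases hc with h | h
      · cases h
      · cases h
    · intro s x hs
      obtain ⟨h1', h2', hT'⟩ := hsem s x hs
      set r := execF L p s with hr
      have happ : execF (L + 1) (fapp p (fun _ => Instr.maxF)) s
          = execF 1 (fun _ => Instr.maxF) r := execF_append p s 1 _
      obtain ⟨e0, eT⟩ := step_maxF r x hT'
      have q0 : execF 1 (fun _ : Fin 1 => (Instr.maxF : Instr d)) r f0 = r f1 := e0
      refine ⟨?_, fun t => by rw [happ]; exact eT t⟩
      intro ne
      rw [happ, q0, h1' (ne_li _), inner_univ _ x (ne_li _),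
        Finset.sup'_congr ne (filter_lt_one hk) (fun j _ => rfl), Finset.sup'_singleton]
  | succ n hn ih =>
    intro hnk
    obtain ⟨L, p, hmem, hsem⟩ := ih (by omega)
    have hn_lt : n < k := by omega
    obtain ⟨L₂, p₂, hmem₂, hsem₂⟩ := innerRun a b ha ⟨n, hn_lt⟩ (l ⟨n, hn_lt⟩) (hl _) le_rfl
    refine ⟨(L + L₂) + 1, fapp (fapp p p₂) (fun _ => Instr.maxL),
      memLm_fapp (memLm_fapp hmem hmem₂) (fun _ => ?_), ?_⟩
    · apply memLm_instr
      intro av c hc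
      rcases hc with h | h
      · cases h
      · cases h
    · intro s x hs
      obtain ⟨h1', hT'⟩ := hsem s x hs
      set r1 := execF L p s with hr1
      obtain ⟨g1, g2, gT⟩ := hsem₂ r1 x hT'
      set r2 := execF L₂ p₂ r1 with hr2
      have happ2 : execF (L + L₂) (fapp p p₂) s = r2 := by
        rw [hr2, hr1]
        exact execF_append p s L₂ p₂
      have happ : execF ((L + L₂) + 1) (fapp (fapp p p₂) (fun _ => Instr.maxL)) s
          = execF 1 (fun _ => Instr.maxL) r2 := by
        rw [← happ2]
        exact execF_append (fapp p p₂) s 1 _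
      obtain ⟨e0, eT⟩ := step_maxL r2 x gT
      have q0 : execF 1 (fun _ : Fin 1 => (Instr.maxL : Instr d)) r2 f0
          = max (r2 f1) (r2 f2) := e0
      have ne_n : (Finset.univ.filter (fun i : Fin k => (i : ℕ) < n)).Nonempty := by
        refine ⟨⟨0, by omega⟩, ?_⟩
        simp only [Finset.mem_filter, Finset.mem_univ, true_and]
        omega
      refine ⟨?_, fun t => by rw [happ]; exact eT t⟩
      intro ne
      rw [happ, q0, g1 (ne_li _), inner_univ _ x (ne_li _), g2, h1' ne_n]
      have hins : (Finset.univ.filter (fun i : Fin k => (i : ℕ) < n + 1)).sup' ne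
            (fun i => Finset.univ.inf' ⟨⟨0, hl i⟩, Finset.mem_univ _⟩
              (fun j => gv (a i j) (b i j) x))
          = (Finset.univ.inf' ⟨⟨0, hl ⟨n, hn_lt⟩⟩, Finset.mem_univ _⟩
              (fun j => gv (a ⟨n, hn_lt⟩ j) (b ⟨n, hn_lt⟩ j) x))
            ⊔ (Finset.univ.filter (fun i : Fin k => (i : ℕ) < n)).sup' ne_n
              (fun i => Finset.univ.inf' ⟨⟨0, hl i⟩, Finset.mem_univ _⟩
                (fun j => gv (a i j) (b i j) x)) := by
        rw [Finset.sup'_congr ne (filter_succ n hn_lt) (fun j _ => rfl)]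
        exact Finset.sup'_insert ne_n _
      rw [hins]

end
end Aux

/-- Every piecewise affine `1`-Lipschitz function, in max–min form with
slopes of Euclidean norm at most `1`, is represented exactly by a network in the fixed-width
class `tilde-G_{d,ReLU,d+3}(ℝ^d,ℝ)`. -/
theorem stmt15 (d k : ℕ) (hk : 0 < k) (l : Fin k → ℕ) (hl : ∀ i, 0 < l i)
    (a : (i : Fin k) → Fin (l i) → EuclideanSpace ℝ (Fin d))
    (b : (i : Fin k) → Fin (l i) → ℝ)
    (ha : ∀ i j, ‖a i j‖ ≤ 1) :
    InTildeG (n := d) (Set.univ : Set (EuclideanSpace ℝ (Fin d)))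
      (fun x => Finset.univ.sup' ⟨⟨0, hk⟩, Finset.mem_univ _⟩ fun i =>
        Finset.univ.inf' ⟨⟨0, hl i⟩, Finset.mem_univ _⟩ fun j =>
          (∑ t, a i j t * x t) + b i j) := by
  classical
  obtain ⟨L, p, hmem, hsem⟩ := Aux.outerRun a b hl ha k hk le_rfl
  refine ⟨L, Aux.Qmat d, 0, fun _ => Aux.T, fun ℓ => Aux.instrMat (p ℓ),
    fun ℓ => Aux.instrVec (p ℓ), Aux.toE (fun j => if j = Aux.f0 then 1 else 0),
    Aux.memRm_Qmat, fun _ => Aux.isTildeLayer_T, fun ℓ => hmem ℓ, ?_, ?_⟩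
  · have habs : ∀ i : Fin (d+3),
        |Aux.toE (fun j => if j = Aux.f0 then (1:ℝ) else 0) i|
          = if i = Aux.f0 then (1:ℝ) else 0 := by
      intro i
      by_cases h : i = Aux.f0 <;> simp [Aux.toE, h]
    rw [Finset.sum_congr rfl (fun i _ => habs i), Finset.sum_ite_eq' Finset.univ Aux.f0
      (fun _ => (1:ℝ))]
    simp
  · intro x _
    have hchain := Aux.altChain_execF L p (matVec (Aux.Qmat d) x + 0)
    have hsum : ∑ i, Aux.toE (fun j => if j = Aux.f0 then (1:ℝ) else 0) i *
          altChain L (fun _ => Aux.T)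
            (fun ℓ u => matVec (Aux.instrMat (p ℓ)) u + Aux.instrVec (p ℓ))
            (matVec (Aux.Qmat d) x + 0) i
        = altChain L (fun _ => Aux.T)
            (fun ℓ u => matVec (Aux.instrMat (p ℓ)) u + Aux.instrVec (p ℓ))
            (matVec (Aux.Qmat d) x + 0) Aux.f0 := by
      rw [Finset.sum_eq_single_of_mem Aux.f0 (Finset.mem_univ _)
        (fun j _ hj => by simp [Aux.toE, hj])]
      simp [Aux.toE]
    rw [hsum, hchain]
    set s0 := Aux.T (matVec (Aux.Qmat d) x + 0) with hs0
    have htail : ∀ t, s0 (embT t) = x t := by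
      intro t
      rw [hs0, Aux.T_applyT]
      have : (matVec (Aux.Qmat d) x + 0) (embT t) = matVec (Aux.Qmat d) x (embT t) := by
        rw [PiLp.add_apply]
        simp
      rw [this, Aux.matVec_Qmat_tail]
    obtain ⟨h0, -⟩ := hsem s0 x htail
    have ne_k : (Finset.univ.filter (fun i : Fin k => (i : ℕ) < k)).Nonempty := by
      refine ⟨⟨0, hk⟩, ?_⟩
      simp only [Finset.mem_filter, Finset.mem_univ, true_and]
      exact hk
    rw [h0 ne_k, Finset.sup'_congr ne_k Aux.filter_all (fun i _ => rfl)]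
    rfl
end
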